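/- Let u ∈ H¹((0,1)^d) and suppose u has a well-defined trace on a compact (d−1)-dimensional Lipschitz submanifold Λ ⊂ (0,1)^d with the trace estimate ‖u‖_{L²(Λ̂)} ≤ C(‖u‖_{L²_{−α}(T̂)} + ‖∇u‖_{L²_{−α}(T̂)}) on the reference element T̂ ⊃ Λ̂. If A_T(x̂) = H x̂ + b maps T̂ onto T with c H d_{Λ̂}(x̂) ≤ d_Λ(A_T(x̂)) ≤ C H d_{Λ̂}(x̂), then for u ∈ H¹_{−α}(T), ‖u‖_{L²(Λ)} ≤ C' H^{ℓ/2} H^{−d/2} H^{α} (‖u‖_{L²_{−α}(T)} + H ‖∇u‖_{L²_{−α}(T)}), where |Λ| ≈ H^ℓ. -/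
import Mathlib

open MeasureTheory
open scoped ENNReal NNReal Pointwise

section Aux

variable {X : Type*} [MeasurableSpace X]

lemma cov_aux (e : X ≃ᵐ X) (μ : Measure X) (k : ℝ≥0∞)
    (h : Measure.map e μ = k • μ) (s : Set X) (f : X → ℝ) :
    ∫ x in s, f (e x) ∂μ = k.toReal * ∫ x in e '' s, f x ∂μ := by
  have hmap : Measure.map e (μ.restrict s) = k • μ.restrict (e '' s) := by
    refine Measure.ext fun A hA => ?_
    rw [Measure.map_apply e.measurable hA, Measure.restrict_apply (e.measurable hA),
      Measure.smul_apply, Measure.restrict_apply hA]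
    have h1 : (⇑e) ⁻¹' A ∩ s = (⇑e) ⁻¹' (A ∩ e '' s) := by
      rw [Set.preimage_inter, Set.preimage_image_eq s e.injective]
    rw [h1, ← MeasurableEquiv.map_apply e, h, Measure.smul_apply]
  calc ∫ x in s, f (e x) ∂μ = ∫ y, f y ∂(Measure.map e (μ.restrict s)) :=
        (MeasureTheory.integral_map_equiv e f).symm
    _ = k.toReal * ∫ x in e '' s, f x ∂μ := by
        rw [hmap, integral_smul_measure, smul_eq_mul]

variable {d : ℕ}

/-- The affine map `x ↦ H • x + b` as a measurable equivalence. -/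
noncomputable def affEq (H : ℝ) (hH : H ≠ 0) (b : EuclideanSpace ℝ (Fin d)) :
    EuclideanSpace ℝ (Fin d) ≃ᵐ EuclideanSpace ℝ (Fin d) where
  toFun x := H • x + b
  invFun y := H⁻¹ • (y - b)
  left_inv x := by simp [smul_smul, inv_mul_cancel₀ hH]
  right_inv y := by simp [smul_smul, mul_inv_cancel₀ hH]
  measurable_toFun := (measurable_id.const_smul H).add_const b
  measurable_invFun := (measurable_id.sub_const b).const_smul H⁻¹

lemma map_volume_affEq (H : ℝ) (hH : 0 < H) (b : EuclideanSpace ℝ (Fin d)) :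
    Measure.map (affEq H hH.ne' b) (volume : Measure (EuclideanSpace ℝ (Fin d))) =
      ENNReal.ofReal (H ^ (-(d : ℝ))) • volume := by
  refine Measure.ext fun A hA => ?_
  rw [Measure.map_apply (affEq H hH.ne' b).measurable hA, Measure.smul_apply, smul_eq_mul]
  have h1 : ⇑(affEq H hH.ne' b) ⁻¹' A
      = (fun x : EuclideanSpace ℝ (Fin d) => H • x) ⁻¹'
        ((fun x : EuclideanSpace ℝ (Fin d) => b + x) ⁻¹' A) := by
    ext x
    show H • x + b ∈ A ↔ b + H • x ∈ A
    rw [add_comm]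
  rw [h1, Measure.addHaar_preimage_smul volume hH.ne', measure_preimage_add]
  congr 1
  rw [finrank_euclideanSpace_fin, abs_of_nonneg (by positivity),
    Real.rpow_neg hH.le, Real.rpow_natCast]

lemma map_hausdorff_affEq (H : ℝ) (hH : 0 < H) (b : EuclideanSpace ℝ (Fin d))
    (ℓr : ℝ) (hℓ : 0 ≤ ℓr) :
    Measure.map (affEq H hH.ne' b) (μH[ℓr] : Measure (EuclideanSpace ℝ (Fin d))) =
      ENNReal.ofReal (H ^ (-ℓr)) • μH[ℓr] := by
  refine Measure.ext fun A hA => ?_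
  rw [Measure.map_apply (affEq H hH.ne' b).measurable hA, Measure.smul_apply, smul_eq_mul]
  have h1 : ⇑(affEq H hH.ne' b) ⁻¹' A
      = H⁻¹ • ((fun x : EuclideanSpace ℝ (Fin d) => b + x) ⁻¹' A) := by
    ext x
    rw [Set.mem_inv_smul_set_iff₀ hH.ne']
    show H • x + b ∈ A ↔ b + H • x ∈ A
    rw [add_comm]
  rw [h1, Measure.hausdorffMeasure_smul₀ hℓ (inv_ne_zero hH.ne'), measure_preimage_add,
    ENNReal.smul_def, smul_eq_mul]
  congr 1
  rw [← ENNReal.ofReal_coe_nnreal]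
  congr 1
  rw [NNReal.coe_rpow, coe_nnnorm, Real.norm_eq_abs, abs_of_pos (inv_pos.2 hH),
    Real.inv_rpow hH.le, ← Real.rpow_neg hH.le]

lemma infDist_affine (H : ℝ) (hH : 0 < H) (b x : EuclideanSpace ℝ (Fin d))
    (s : Set (EuclideanSpace ℝ (Fin d))) :
    Metric.infDist (H • x + b) ((fun z => H • z + b) '' s) = H * Metric.infDist x s := by
  have himg : (fun z : EuclideanSpace ℝ (Fin d) => H • z + b) '' s
      = (fun z : EuclideanSpace ℝ (Fin d) => z + b) '' (H • s) := by
    rw [← Set.image_smul, Set.image_image]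
  have hiso : Isometry (fun z : EuclideanSpace ℝ (Fin d) => z + b) :=
    Isometry.of_dist_eq fun a a' => dist_add_right a a' b
  rw [himg, show H • x + b = (fun z : EuclideanSpace ℝ (Fin d) => z + b) (H • x) from rfl,
    Metric.infDist_image hiso, infDist_smul₀ hH.ne' s x, Real.norm_eq_abs, abs_of_pos hH]

lemma grad_affine (H : ℝ) (hH : 0 < H) (b : EuclideanSpace ℝ (Fin d))
    (u : EuclideanSpace ℝ (Fin d) → ℝ) (x : EuclideanSpace ℝ (Fin d)) :
    ‖gradient (fun y => u (H • y + b)) x‖ = H * ‖gradient u (H • x + b)‖ := by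
  have hnorm : ∀ (f : EuclideanSpace ℝ (Fin d) → ℝ) (y), ‖gradient f y‖ = ‖fderiv ℝ f y‖ :=
    fun f y => (InnerProductSpace.toDual ℝ _).symm.norm_map (fderiv ℝ f y)
  rw [hnorm, hnorm]
  by_cases hu : DifferentiableAt ℝ u (H • x + b)
  · have he : HasFDerivAt (fun y : EuclideanSpace ℝ (Fin d) => H • y + b)
        (H • ContinuousLinearMap.id ℝ (EuclideanSpace ℝ (Fin d))) x :=
      ((hasFDerivAt_id x).const_smul H).add_const b
    have h2 : HasFDerivAt (fun y => u (H • y + b))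
        ((fderiv ℝ u (H • x + b)).comp
          (H • ContinuousLinearMap.id ℝ (EuclideanSpace ℝ (Fin d)))) x :=
      hu.hasFDerivAt.comp x he
    have h3 : (fderiv ℝ u (H • x + b)).comp
        (H • ContinuousLinearMap.id ℝ (EuclideanSpace ℝ (Fin d)))
        = H • fderiv ℝ u (H • x + b) := by
      ext v
      simp
    rw [h2.fderiv, h3, norm_smul, Real.norm_eq_abs, abs_of_pos hH]
  · have hcomp : ¬ DifferentiableAt ℝ (fun y => u (H • y + b)) x := by
      intro hcd
      have hinv : DifferentiableAt ℝ (fun y : EuclideanSpace ℝ (Fin d) => H⁻¹ • (y - b))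
          (H • x + b) := (differentiableAt_id.sub_const b).const_smul H⁻¹
      have hcd' : DifferentiableAt ℝ (fun y => u (H • y + b))
          ((fun y : EuclideanSpace ℝ (Fin d) => H⁻¹ • (y - b)) (H • x + b)) := by
        have hpt : (fun y : EuclideanSpace ℝ (Fin d) => H⁻¹ • (y - b)) (H • x + b) = x := by
          simp [smul_smul, inv_mul_cancel₀ hH.ne']
        rw [hpt]; exact hcd
      have h5 := hcd'.comp (H • x + b) hinv
      have heq : ((fun y => u (H • y + b)) ∘
          fun y : EuclideanSpace ℝ (Fin d) => H⁻¹ • (y - b)) = u := by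
        funext y
        simp [Function.comp, smul_smul, mul_inv_cancel₀ hH.ne']
      rw [heq] at h5
      exact hu h5
    rw [fderiv_zero_of_not_differentiableAt hcomp, fderiv_zero_of_not_differentiableAt hu]
    simp

end Aux
/-- Scaled weighted trace inequality: if the affine map `A_T(x̂) = H x̂ + b`
maps the reference element `Tref ⊃ Λref` onto `T ⊃ Λ` with comparable scaling of
the distance functions, `|Λ| ≈ H^ℓ`, and the reference-element trace estimate
holds for `û = u ∘ A_T`, then
`‖u‖_{L²(Λ)} ≤ C' H^{ℓ/2} H^{−d/2} H^{α} (‖u‖_{L²_{−α}(T)} + H ‖∇u‖_{L²_{−α}(T)})`. -/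
theorem stmt_16 (d ℓ : ℕ) (hℓd : ℓ < d) (α : ℝ)
    (Tref Λref T Λ : Set (EuclideanSpace ℝ (Fin d)))
    (hΛT : Λref ⊆ Tref) (hcomp : IsCompact Λref)
    (H : ℝ) (hH : 0 < H) (b : EuclideanSpace ℝ (Fin d))
    (hT : T = (fun x => H • x + b) '' Tref)
    (hΛ : Λ = (fun x => H • x + b) '' Λref)
    (c C Cref CΛ : ℝ) (hc : 0 < c) (hC : 0 < C) (hCref : 0 < Cref) (hCΛ : 0 < CΛ)
    (hvol : (μH[(ℓ : ℝ)] Λ).toReal ≤ CΛ * H ^ (ℓ : ℝ))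
    (hdist : ∀ x ∈ Tref,
      c * H * Metric.infDist x Λref ≤ Metric.infDist (H • x + b) Λ ∧
      Metric.infDist (H • x + b) Λ ≤ C * H * Metric.infDist x Λref) :
    ∃ C' > 0, ∀ u : EuclideanSpace ℝ (Fin d) → ℝ,
      (Real.sqrt (∫ x in Λref, (u (H • x + b)) ^ 2 ∂(μH[(ℓ : ℝ)])) ≤
        Cref * (Real.sqrt (∫ x in Tref,
            (u (H • x + b)) ^ 2 * Metric.infDist x Λref ^ (-(2 * α))) +
          Real.sqrt (∫ x in Tref,
            ‖gradient (fun y => u (H • y + b)) x‖ ^ 2 *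
              Metric.infDist x Λref ^ (-(2 * α))))) →
      Real.sqrt (∫ x in Λ, (u x) ^ 2 ∂(μH[(ℓ : ℝ)])) ≤
        C' * H ^ ((ℓ : ℝ) / 2) * H ^ (-(d : ℝ) / 2) * H ^ α *
          (Real.sqrt (∫ x in T, (u x) ^ 2 * Metric.infDist x Λ ^ (-(2 * α))) +
            H * Real.sqrt (∫ x in T,
              ‖gradient u x‖ ^ 2 * Metric.infDist x Λ ^ (-(2 * α)))) := by
  refine ⟨Cref, hCref, fun u hyp => ?_⟩
  set e := affEq H hH.ne' b with he_def
  have hecoe : ⇑e = fun x => H • x + b := rfl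
  -- square-root of a power of H
  have hsq : ∀ t : ℝ, Real.sqrt (H ^ t) = H ^ (t / 2) := by
    intro t
    rw [show H ^ t = (H ^ (t / 2)) ^ 2 by
      rw [← Real.rpow_natCast (H ^ (t / 2)) 2, ← Real.rpow_mul hH.le]
      norm_num]
    exact Real.sqrt_sq (Real.rpow_nonneg hH.le _)
  -- scaling of the distance to Λ
  have hid : ∀ x : EuclideanSpace ℝ (Fin d),
      Metric.infDist (H • x + b) Λ = H * Metric.infDist x Λref := by
    intro x; rw [hΛ]; exact infDist_affine H hH b x Λref
  -- scaling of the weight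
  have hw : ∀ x : EuclideanSpace ℝ (Fin d),
      Metric.infDist x Λref ^ (-(2 * α)) =
        H ^ (2 * α) * Metric.infDist (H • x + b) Λ ^ (-(2 * α)) := by
    intro x
    rw [hid x, Real.mul_rpow hH.le Metric.infDist_nonneg, ← mul_assoc,
      ← Real.rpow_add hH, add_neg_cancel, Real.rpow_zero, one_mul]
  -- change of variables for the Hausdorff integral over Λ
  have hL : ∫ x in Λref, (u (H • x + b)) ^ 2 ∂(μH[(ℓ : ℝ)])
      = H ^ (-(ℓ : ℝ)) * ∫ x in Λ, (u x) ^ 2 ∂(μH[(ℓ : ℝ)]) := by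
    have h0 := cov_aux e μH[(ℓ : ℝ)] (ENNReal.ofReal (H ^ (-(ℓ : ℝ))))
      (map_hausdorff_affEq H hH b (ℓ : ℝ) (Nat.cast_nonneg ℓ)) Λref (fun y => (u y) ^ 2)
    rw [ENNReal.toReal_ofReal (Real.rpow_nonneg hH.le _)] at h0
    simp only [hecoe] at h0
    rw [← hΛ] at h0
    exact h0
  have hLinv : ∫ x in Λ, (u x) ^ 2 ∂(μH[(ℓ : ℝ)])
      = H ^ (ℓ : ℝ) * ∫ x in Λref, (u (H • x + b)) ^ 2 ∂(μH[(ℓ : ℝ)]) := by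
    rw [hL, ← mul_assoc, ← Real.rpow_add hH, add_neg_cancel, Real.rpow_zero, one_mul]
  -- change of variables for the first volume integral
  have hR1 : ∫ x in Tref, (u (H • x + b)) ^ 2 * Metric.infDist x Λref ^ (-(2 * α))
      = H ^ (2 * α) * (H ^ (-(d : ℝ)) *
          ∫ x in T, (u x) ^ 2 * Metric.infDist x Λ ^ (-(2 * α))) := by
    have h1 : ∀ x : EuclideanSpace ℝ (Fin d),
        (u (H • x + b)) ^ 2 * Metric.infDist x Λref ^ (-(2 * α))
        = H ^ (2 * α) * ((fun y => (u y) ^ 2 * Metric.infDist y Λ ^ (-(2 * α))) (H • x + b)) := by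
      intro x; rw [hw x]; ring
    simp only [h1]
    rw [MeasureTheory.integral_const_mul]
    congr 1
    have h0 := cov_aux e volume (ENNReal.ofReal (H ^ (-(d : ℝ))))
      (map_volume_affEq H hH b) Tref
      (fun y => (u y) ^ 2 * Metric.infDist y Λ ^ (-(2 * α)))
    rw [ENNReal.toReal_ofReal (Real.rpow_nonneg hH.le _)] at h0
    simp only [hecoe] at h0
    rw [← hT] at h0
    exact h0
  -- change of variables for the gradient integral
  have hR2 : ∫ x in Tref, ‖gradient (fun y => u (H • y + b)) x‖ ^ 2 *
        Metric.infDist x Λref ^ (-(2 * α))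
      = H ^ 2 * (H ^ (2 * α) * (H ^ (-(d : ℝ)) *
          ∫ x in T, ‖gradient u x‖ ^ 2 * Metric.infDist x Λ ^ (-(2 * α)))) := by
    have h1 : ∀ x : EuclideanSpace ℝ (Fin d),
        ‖gradient (fun y => u (H • y + b)) x‖ ^ 2 * Metric.infDist x Λref ^ (-(2 * α))
        = (H ^ 2 * H ^ (2 * α)) *
            ((fun y => ‖gradient u y‖ ^ 2 * Metric.infDist y Λ ^ (-(2 * α))) (H • x + b)) := by
      intro x; rw [grad_affine H hH b u x, hw x]; ring
    simp only [h1]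
    rw [MeasureTheory.integral_const_mul, mul_assoc]
    congr 1
    have h0 := cov_aux e volume (ENNReal.ofReal (H ^ (-(d : ℝ))))
      (map_volume_affEq H hH b) Tref
      (fun y => ‖gradient u y‖ ^ 2 * Metric.infDist y Λ ^ (-(2 * α)))
    rw [ENNReal.toReal_ofReal (Real.rpow_nonneg hH.le _)] at h0
    simp only [hecoe] at h0
    rw [← hT] at h0
    rw [h0]
  calc Real.sqrt (∫ x in Λ, (u x) ^ 2 ∂(μH[(ℓ : ℝ)]))
      = H ^ ((ℓ : ℝ) / 2) *
          Real.sqrt (∫ x in Λref, (u (H • x + b)) ^ 2 ∂(μH[(ℓ : ℝ)])) := by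
        rw [hLinv, Real.sqrt_mul (Real.rpow_nonneg hH.le _), hsq]
    _ ≤ H ^ ((ℓ : ℝ) / 2) * (Cref * (Real.sqrt (∫ x in Tref,
            (u (H • x + b)) ^ 2 * Metric.infDist x Λref ^ (-(2 * α))) +
          Real.sqrt (∫ x in Tref,
            ‖gradient (fun y => u (H • y + b)) x‖ ^ 2 *
              Metric.infDist x Λref ^ (-(2 * α))))) :=
        mul_le_mul_of_nonneg_left hyp (Real.rpow_nonneg hH.le _)
    _ = Cref * H ^ ((ℓ : ℝ) / 2) * H ^ (-(d : ℝ) / 2) * H ^ α *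
          (Real.sqrt (∫ x in T, (u x) ^ 2 * Metric.infDist x Λ ^ (-(2 * α))) +
            H * Real.sqrt (∫ x in T,
              ‖gradient u x‖ ^ 2 * Metric.infDist x Λ ^ (-(2 * α)))) := by
        rw [hR1, hR2,
          Real.sqrt_mul (Real.rpow_nonneg hH.le _),
          Real.sqrt_mul (Real.rpow_nonneg hH.le _),
          Real.sqrt_mul (sq_nonneg H),
          Real.sqrt_mul (Real.rpow_nonneg hH.le _),
          Real.sqrt_mul (Real.rpow_nonneg hH.le _),
          Real.sqrt_sq hH.le, hsq, hsq, show 2 * α / 2 = α by ring]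
        ring
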